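/- Let δ ∈ (0,1], t ∈ [1,2), θ₀ ∈ S¹, and let L ⊂ ℝ² be a segment of length δ^(1-t/2) with direction θ₀. Let S be the union of all closed axis-parallel squares of side δ intersecting L. Then for every θ ∈ S¹ with |θ - θ₀| ≤ δ^(t/2), we have diam(πθ(S)) ≤ Cδ for an absolute constant C (e.g. C = 10). -/

import Mathlib

open MeasureTheory Metric Set Filter

noncomputable def perp (θ : EuclideanSpace ℝ (Fin 2)) : EuclideanSpace ℝ (Fin 2) :=
  (WithLp.equiv 2 (Fin 2 → ℝ)).symm ![-θ 1, θ 0]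

/-- Orthogonal projection onto span(θ^⊥), viewed as a map to ℝ. -/
noncomputable def proj (θ x : EuclideanSpace ℝ (Fin 2)) : ℝ := inner ℝ x (perp θ)

/-- The closed dyadic δ-square [jδ,(j+1)δ] × [kδ,(k+1)δ]. -/
def dsq (δ : ℝ) (j k : ℤ) : Set (EuclideanSpace ℝ (Fin 2)) :=
  {x | x 0 ∈ Set.Icc (j * δ) ((j + 1) * δ) ∧ x 1 ∈ Set.Icc (k * δ) ((k + 1) * δ)}

lemma perp_apply0 (θ : EuclideanSpace ℝ (Fin 2)) : perp θ 0 = -θ 1 := by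
  simp [perp]

lemma perp_apply1 (θ : EuclideanSpace ℝ (Fin 2)) : perp θ 1 = θ 0 := by
  simp [perp]

lemma proj_eq (θ x : EuclideanSpace ℝ (Fin 2)) :
    proj θ x = x 0 * (-(θ 1)) + x 1 * θ 0 := by
  simp [proj, PiLp.inner_apply, Fin.sum_univ_two, perp_apply0, perp_apply1,
    RCLike.inner_apply, conj_trivial]
  ring

lemma norm_perp (θ : EuclideanSpace ℝ (Fin 2)) : ‖perp θ‖ = ‖θ‖ := by
  rw [EuclideanSpace.norm_eq, EuclideanSpace.norm_eq]
  simp [Fin.sum_univ_two, perp_apply0, perp_apply1, abs_neg, add_comm]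

lemma self_perp (θ : EuclideanSpace ℝ (Fin 2)) : proj θ θ = 0 := by
  rw [proj_eq]; ring

lemma sq_est (δ : ℝ) (hδ : 0 ≤ δ) (j k : ℤ) (θ x p : EuclideanSpace ℝ (Fin 2))
    (hθ : ‖θ‖ = 1) (hx : x ∈ dsq δ j k) (hp : p ∈ dsq δ j k) :
    |proj θ x - proj θ p| ≤ 2 * δ := by
  obtain ⟨⟨hx01, hx02⟩, hx11, hx12⟩ := hx
  obtain ⟨⟨hp01, hp02⟩, hp11, hp12⟩ := hp
  have hring : ((j : ℝ) + 1) * δ = j * δ + δ := by ring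
  have hring' : ((k : ℝ) + 1) * δ = k * δ + δ := by ring
  have h0 : |x 0 - p 0| ≤ δ := by rw [abs_sub_le_iff]; constructor <;> linarith
  have h1 : |x 1 - p 1| ≤ δ := by rw [abs_sub_le_iff]; constructor <;> linarith
  have hsum : θ 0 ^ 2 + θ 1 ^ 2 = 1 := by
    have := hθ
    rw [EuclideanSpace.norm_eq, Fin.sum_univ_two] at this
    have h := congrArg (· ^ 2) this
    simp only [Real.sq_sqrt (by positivity : (0:ℝ) ≤ ‖θ 0‖^2 + ‖θ 1‖^2)] at h
    simpa [Real.norm_eq_abs, sq_abs] using h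
  have hθ0 : |θ 0| ≤ 1 := by nlinarith [sq_abs (θ 0), sq_abs (θ 1), abs_nonneg (θ 0), abs_nonneg (θ 1)]
  have hθ1 : |θ 1| ≤ 1 := by nlinarith [sq_abs (θ 0), sq_abs (θ 1), abs_nonneg (θ 0), abs_nonneg (θ 1)]
  have key : proj θ x - proj θ p = (x 0 - p 0) * (-(θ 1)) + (x 1 - p 1) * θ 0 := by
    rw [proj_eq, proj_eq]; ring
  calc |proj θ x - proj θ p|
      ≤ |(x 0 - p 0) * (-(θ 1))| + |(x 1 - p 1) * θ 0| := by rw [key]; exact abs_add_le _ _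
    _ = |x 0 - p 0| * |θ 1| + |x 1 - p 1| * |θ 0| := by rw [abs_mul, abs_mul, abs_neg]
    _ ≤ δ * 1 + δ * 1 :=
        add_le_add (mul_le_mul h0 hθ1 (abs_nonneg _) hδ) (mul_le_mul h1 hθ0 (abs_nonneg _) hδ)
    _ = 2 * δ := by ring

lemma seg_est (δ t : ℝ) (hδ : 0 < δ) (θ θ₀ a b p q : EuclideanSpace ℝ (Fin 2))
    (hθ : ‖θ‖ = 1) (hdir : b = a + (δ ^ (1 - t/2)) • θ₀)
    (hclose : ‖θ - θ₀‖ ≤ δ ^ (t/2))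
    (hp : p ∈ segment ℝ a b) (hq : q ∈ segment ℝ a b) :
    |proj θ p - proj θ q| ≤ δ := by
  obtain ⟨u, v, hu, hv, huv, rfl⟩ := hp
  obtain ⟨u', v', hu', hv', huv', rfl⟩ := hq
  set r := δ ^ (1 - t/2) with hr
  have hrpos : 0 < r := Real.rpow_pos_of_pos hδ _
  have hpq : (u • a + v • b) - (u' • a + v' • b) = ((v - v') * r) • θ₀ := by
    subst hdir
    have h1 : u = 1 - v := by linarith
    have h2 : u' = 1 - v' := by linarith
    subst h1; subst h2
    module
  have hlin : proj θ (u • a + v • b) - proj θ (u' • a + v' • b)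
      = ((v - v') * r) * inner ℝ θ₀ (perp θ) := by
    unfold proj
    rw [← inner_sub_left, hpq, real_inner_smul_left]
  have hperp0 : (inner ℝ θ (perp θ) : ℝ) = 0 := self_perp θ
  have hinner : |(inner ℝ θ₀ (perp θ) : ℝ)| ≤ δ ^ (t/2) := by
    have : (inner ℝ θ₀ (perp θ) : ℝ) = inner ℝ (θ₀ - θ) (perp θ) := by
      rw [inner_sub_left, hperp0]; ring
    rw [this]
    calc |(inner ℝ (θ₀ - θ) (perp θ) : ℝ)| ≤ ‖θ₀ - θ‖ * ‖perp θ‖ := abs_real_inner_le_norm _ _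
      _ = ‖θ - θ₀‖ := by rw [norm_perp, hθ, norm_sub_rev]; ring
      _ ≤ δ ^ (t/2) := hclose
  have hvv : |v - v'| ≤ 1 := by rw [abs_sub_le_iff]; constructor <;> linarith
  calc |proj θ (u • a + v • b) - proj θ (u' • a + v' • b)|
      = |v - v'| * r * |(inner ℝ θ₀ (perp θ) : ℝ)| := by
        rw [hlin, abs_mul, abs_mul, abs_of_pos hrpos]
    _ ≤ 1 * r * (δ ^ (t/2)) := by
        apply mul_le_mul (mul_le_mul_of_nonneg_right hvv hrpos.le) hinner (abs_nonneg _)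
        positivity
    _ = δ := by
        rw [one_mul, hr, ← Real.rpow_add hδ]
        norm_num

theorem stmt_1 (δ t : ℝ) (hδ : δ ∈ Set.Ioc (0:ℝ) 1) (ht : t ∈ Set.Ico (1:ℝ) 2)
    (θ₀ θ a b : EuclideanSpace ℝ (Fin 2)) (hθ₀ : ‖θ₀‖ = 1) (hθ : ‖θ‖ = 1)
    (hdir : b = a + (δ ^ (1 - t/2)) • θ₀)
    (hclose : ‖θ - θ₀‖ ≤ δ ^ (t/2)) :
    Metric.diam (proj θ ''
      (⋃ (j : ℤ) (k : ℤ) (_ : (dsq δ j k ∩ segment ℝ a b).Nonempty), dsq δ j k))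
      ≤ 10 * δ := by
  obtain ⟨hδ0, hδ1⟩ := hδ
  apply Metric.diam_le_of_forall_dist_le (by positivity)
  rintro u ⟨x, hx, rfl⟩ w ⟨y, hy, rfl⟩
  simp only [Set.mem_iUnion] at hx hy
  obtain ⟨j, k, ⟨p, hpsq, hpseg⟩, hxsq⟩ := hx
  obtain ⟨j', k', ⟨q, hqsq, hqseg⟩, hysq⟩ := hy
  rw [Real.dist_eq]
  have h1 := sq_est δ hδ0.le j k θ x p hθ hxsq hpsq
  have h2 := seg_est δ t hδ0 θ θ₀ a b p q hθ hdir hclose hpseg hqseg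
  have h3 := sq_est δ hδ0.le j' k' θ y q hθ hysq hqsq
  have : proj θ x - proj θ y =
      (proj θ x - proj θ p) + (proj θ p - proj θ q) + (proj θ q - proj θ y) := by ring
  rw [this]
  calc |(proj θ x - proj θ p) + (proj θ p - proj θ q) + (proj θ q - proj θ y)|
      ≤ |proj θ x - proj θ p| + |proj θ p - proj θ q| + |proj θ q - proj θ y| :=
        (abs_add_le _ _).trans (by gcongr; exact abs_add_le _ _)
    _ ≤ 2 * δ + δ + 2 * δ := by
        rw [abs_sub_comm] at h3
        gcongr
    _ ≤ 10 * δ := by linarith
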